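/- If X is a totally bounded metric space, then the set of Lipschitz real-valued functions on X is uniformly dense in the set of uniformly continuous real-valued functions on X: for every uniformly continuous f : X → ℝ and every ε > 0 there exists a Lipschitz function g : X → ℝ with |f(x) - g(x)| ≤ ε for all x ∈ X. -/

import Mathlib

theorem stmt_2 {X : Type*} [MetricSpace X]
    (htb : TotallyBounded (Set.univ : Set X))
    (f : X → ℝ) (hf : UniformContinuous f)
    (ε : ℝ) (hε : 0 < ε) :
    ∃ g : X → ℝ, ∃ σ : ℝ, 0 ≤ σ ∧ (∀ x y, |g x - g y| ≤ σ * dist x y) ∧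
      ∀ x, |f x - g x| ≤ ε := by
  rcases isEmpty_or_nonempty X with hX | hX
  · exact ⟨0, 0, le_refl _, fun x => (IsEmpty.false x).elim, fun x => (IsEmpty.false x).elim⟩
  -- f is bounded
  have htb' : TotallyBounded (f '' Set.univ) := htb.image hf
  have hbd : Bornology.IsBounded (f '' Set.univ) := htb'.isBounded
  obtain ⟨C, hC⟩ := hbd.exists_norm_le
  have hC' : ∀ x : X, ‖f x‖ ≤ C := fun x => hC _ ⟨x, trivial, rfl⟩
  have hC0 : 0 ≤ C := le_trans (norm_nonneg _) (hC' hX.some)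
  -- uniform continuity
  obtain ⟨δ, hδ, hfd⟩ := Metric.uniformContinuous_iff.mp hf ε hε
  set K : ℝ := 2 * C / δ with hK
  have hK0 : 0 ≤ K := div_nonneg (by linarith) hδ.le
  set g : X → ℝ := fun x => ⨅ y, (f y + K * dist x y) with hg
  have hbdd : ∀ x : X, BddBelow (Set.range fun y => f y + K * dist x y) := by
    intro x
    refine ⟨-C, ?_⟩
    rintro _ ⟨y, rfl⟩
    have h1 : -C ≤ f y := neg_le_of_abs_le (by simpa [Real.norm_eq_abs] using hC' y)
    have h2 : 0 ≤ K * dist x y := mul_nonneg hK0 dist_nonneg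
    show -C ≤ f y + K * dist x y
    linarith
  have hle : ∀ x, g x ≤ f x := by
    intro x
    have := ciInf_le (hbdd x) x
    simpa using this
  have hge : ∀ x, f x - ε ≤ g x := by
    intro x
    refine le_ciInf fun y => ?_
    rcases lt_or_ge (dist x y) δ with h | h
    · have := hfd h
      rw [Real.dist_eq] at this
      have h2 : 0 ≤ K * dist x y := mul_nonneg hK0 dist_nonneg
      have := abs_lt.mp this
      linarith [this.1, this.2]
    · have h2 : K * δ ≤ K * dist x y := mul_le_mul_of_nonneg_left h hK0
      have h3 : K * δ = 2 * C := by
        rw [hK, div_mul_cancel₀ _ hδ.ne']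
      have h4 : -C ≤ f y := neg_le_of_abs_le (by simpa [Real.norm_eq_abs] using hC' y)
      have h5 : f x ≤ C := le_of_abs_le (by simpa [Real.norm_eq_abs] using hC' x)
      linarith
  refine ⟨g, K, hK0, ?_, fun x => abs_le.mpr ⟨by linarith [hle x, hε], by linarith [hge x]⟩⟩
  intro x z
  have key : ∀ a b : X, g a ≤ g b + K * dist a b := by
    intro a b
    rw [hg]
    have : (⨅ y, (f y + K * dist b y)) + K * dist a b
        = ⨅ y, (f y + K * dist b y + K * dist a b) :=
      ciInf_add (hbdd b) _
    rw [this]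
    refine ciInf_mono (hbdd a) fun y => ?_
    have h := dist_triangle a b y
    nlinarith [mul_le_mul_of_nonneg_left h hK0]
  rw [abs_sub_le_iff]
  constructor
  · linarith [key x z]
  · have h := key z x
    rw [dist_comm z x] at h
    linarith
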